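/- Let Q be a finite set of pairwise non-overlapping axis-parallel placed rectangles in the plane. Define a directed graph D on vertex set Q by putting an arc from R to R' whenever the bottom side of R intersects the top side of R' in more than a single point, or the left side of R intersects the right side of R' in more than a single point. Then D has no directed cycle. -/

import Mathlib

/-- A placed axis-parallel rectangle `[x, x+w] × [y, y+h]`. -/
structure PRect where
  x : ℝ
  y : ℝ
  w : ℝ
  h : ℝ

namespace PRect

/-- The rectangle as a subset of the plane. -/
def toSet (R : PRect) : Set (ℝ × ℝ) :=
  Set.Icc R.x (R.x + R.w) ×ˢ Set.Icc R.y (R.y + R.h)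

/-- The (open) interior of a placed rectangle. -/
def inter (R : PRect) : Set (ℝ × ℝ) :=
  Set.Ioo R.x (R.x + R.w) ×ˢ Set.Ioo R.y (R.y + R.h)

/-- Two placed rectangles overlap if their interiors intersect. -/
def Overlap (R R' : PRect) : Prop := (R.inter ∩ R'.inter).Nonempty

/-- The rectangle has positive width and height. -/
def Proper (R : PRect) : Prop := 0 < R.w ∧ 0 < R.h

/-- The left side `{x} × [y, y+h]`. -/
def leftSide (R : PRect) : Set (ℝ × ℝ) := {R.x} ×ˢ Set.Icc R.y (R.y + R.h)

/-- The right side `{x+w} × [y, y+h]`. -/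
def rightSide (R : PRect) : Set (ℝ × ℝ) := {R.x + R.w} ×ˢ Set.Icc R.y (R.y + R.h)

/-- The bottom side `[x, x+w] × {y}`. -/
def bottomSide (R : PRect) : Set (ℝ × ℝ) := Set.Icc R.x (R.x + R.w) ×ˢ {R.y}

/-- The top side `[x, x+w] × {y+h}`. -/
def topSide (R : PRect) : Set (ℝ × ℝ) := Set.Icc R.x (R.x + R.w) ×ˢ {R.y + R.h}

end PRect

/-- There is an arc from `R` to `R'` if the bottom side of `R` intersects the top side
of `R'` in more than a single point, or the left side of `R` intersects the right side
of `R'` in more than a single point. -/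
def Arc (R R' : PRect) : Prop :=
  ¬ (R.bottomSide ∩ R'.topSide).Subsingleton ∨ ¬ (R.leftSide ∩ R'.rightSide).Subsingleton
/-! ### Auxiliary definitions and lemmas for the proof -/

/-- Open overlap of the horizontal extents. -/
def Xov (A B : PRect) : Prop := A.x < B.x + B.w ∧ B.x < A.x + A.w

/-- Open overlap of the vertical extents. -/
def Yov (A B : PRect) : Prop := A.y < B.y + B.h ∧ B.y < A.y + A.h

/-- `C` lies (weakly) above `B` with horizontally overlapping extents. -/
def UpRel (C B : PRect) : Prop := Xov C B ∧ B.y + B.h ≤ C.y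

/-- `C` lies (weakly) to the right of `B` with vertically overlapping extents. -/
def RtRel (C B : PRect) : Prop := Yov C B ∧ B.x + B.w ≤ C.x

lemma overlap_of_xov_yov {A B : PRect} (hA : A.Proper) (hB : B.Proper)
    (hx : Xov A B) (hy : Yov A B) : A.Overlap B := by
  unfold PRect.Overlap PRect.inter
  rw [Set.prod_inter_prod]
  apply Set.Nonempty.prod
  · rw [Set.Ioo_inter_Ioo]
    exact Set.nonempty_Ioo.2 (by
      simp only [lt_inf_iff, sup_lt_iff]
      refine ⟨⟨?_, ?_⟩, ?_, ?_⟩ <;> linarith [hA.1, hB.1, hx.1, hx.2])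
  · rw [Set.Ioo_inter_Ioo]
    exact Set.nonempty_Ioo.2 (by
      simp only [lt_inf_iff, sup_lt_iff]
      refine ⟨⟨?_, ?_⟩, ?_, ?_⟩ <;> linarith [hA.2, hB.2, hy.1, hy.2])

/-- Every finite nonempty packing contains a rectangle with nothing touching-above
(with overlapping x-extent) and nothing touching-right (with overlapping y-extent). -/
lemma exists_sink (F : Set PRect) (hfin : F.Finite) (hne : F.Nonempty)
    (hproper : ∀ R ∈ F, R.Proper)
    (hdisj : ∀ R ∈ F, ∀ R' ∈ F, R ≠ R' → ¬ R.Overlap R') :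
    ∃ B ∈ F, (∀ C ∈ F, ¬ UpRel C B) ∧ (∀ C ∈ F, ¬ RtRel C B) := by
  classical
  -- "good" rectangles: nothing touching from above, and a "no high right" condition.
  set good : PRect → Prop := fun B =>
    B ∈ F ∧ (∀ C ∈ F, ¬ UpRel C B) ∧
      (∀ C ∈ F, B.y + B.h ≤ C.y → C.x + C.w ≤ B.x + B.w) with hgood
  -- a rectangle of maximal top is good
  obtain ⟨B0, hB0F, hB0max⟩ := hfin.exists_maximalFor (fun R => R.y + R.h) F hne
  have hB0top : ∀ C ∈ F, C.y + C.h ≤ B0.y + B0.h := by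
    intro C hC
    by_contra h
    push_neg at h
    exact absurd (hB0max (j := C) hC h.le) (not_le.2 h)
  have hB0good : good B0 := by
    refine ⟨hB0F, ?_, ?_⟩
    · rintro C hC ⟨-, hle⟩
      have := hB0top C hC
      have := (hproper C hC).2
      linarith
    · intro C hC hle
      have := hB0top C hC
      have := (hproper C hC).2
      linarith
  -- take a good rectangle with maximal x
  have hSfin : {B | good B}.Finite := hfin.subset (fun B hB => hB.1)
  obtain ⟨B, hBgood, hBmax⟩ :=
    hSfin.exists_maximalFor (fun R => R.x) {B | good B} ⟨B0, hB0good⟩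
  have hBxmax : ∀ C, good C → C.x ≤ B.x := by
    intro C hC
    by_contra h
    push_neg at h
    exact absurd (hBmax (j := C) hC h.le) (not_le.2 h)
  obtain ⟨hBF, hBup, hBK⟩ := hBgood
  refine ⟨B, hBF, hBup, ?_⟩
  -- suppose some rectangle touches B on the right
  intro C0 hC0 hRT0
  -- take such a rectangle with maximal top
  set T : Set PRect := {C | C ∈ F ∧ RtRel C B} with hT
  have hTfin : T.Finite := hfin.subset (fun C hC => hC.1)
  obtain ⟨B', hB'T, hB'max⟩ :=
    hTfin.exists_maximalFor (fun R => R.y + R.h) T ⟨C0, hC0, hRT0⟩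
  have hB'top : ∀ C ∈ T, C.y + C.h ≤ B'.y + B'.h := by
    intro C hC
    by_contra h
    push_neg at h
    exact absurd (hB'max (j := C) hC h.le) (not_le.2 h)
  obtain ⟨hB'F, hyovB'B, hrb⟩ := hB'T
  -- B' is good, contradicting maximality of B.x
  have hB'good : good B' := by
    refine ⟨hB'F, ?_, ?_⟩
    · -- nothing touches B' from above
      rintro C hC ⟨hxov', htop'⟩
      by_cases hb : B.y + B.h ≤ C.y
      · have := hBK C hC hb
        have := hxov'.2
        linarith
      · push_neg at hb
        have hCh := (hproper C hC).2
        have hBw := (hproper B hBF).1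
        have hyovCB : Yov C B := ⟨hb, by linarith [hyovB'B.2]⟩
        have hneCB : C ≠ B := by
          rintro rfl
          linarith [hyovB'B.2]
        have hnx : ¬ Xov C B := fun hx =>
          hdisj C hC B hBF hneCB
            (overlap_of_xov_yov (hproper C hC) (hproper B hBF) hx hyovCB)
        rw [Xov, not_and_or, not_lt, not_lt] at hnx
        rcases hnx with h | h
        · -- C is to the right of B: C ∈ T, contradict maximal top of B'
          have hCT : C ∈ T := ⟨hC, hyovCB, h⟩
          have := hB'top C hCT
          linarith
        · -- C entirely left of B: impossible since C overlaps B' in x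
          have := hxov'.2
          linarith
    · -- the K condition for B'
      intro C hC htop'
      by_contra hcon
      push_neg at hcon
      by_cases hb : B.y + B.h ≤ C.y
      · have := hBK C hC hb
        have hB'w := (hproper B' hB'F).1
        linarith
      · push_neg at hb
        have hCh := (hproper C hC).2
        have hBw := (hproper B hBF).1
        have hB'w := (hproper B' hB'F).1
        have hyovCB : Yov C B := ⟨hb, by linarith [hyovB'B.2]⟩
        have hneCB : C ≠ B := by
          rintro rfl
          linarith [hyovB'B.2]
        have hnx : ¬ Xov C B := fun hx =>
          hdisj C hC B hBF hneCB
            (overlap_of_xov_yov (hproper C hC) (hproper B hBF) hx hyovCB)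
        rw [Xov, not_and_or, not_lt, not_lt] at hnx
        rcases hnx with h | h
        · have hCT : C ∈ T := ⟨hC, hyovCB, h⟩
          have := hB'top C hCT
          linarith
        · linarith
  have := hBxmax B' hB'good
  have hBw := (hproper B hBF).1
  linarith

/-- A more-than-one-point bottom/top contact yields the `UpRel` relation. -/
lemma upRel_of_contact {R B : PRect}
    (h : ¬ (R.bottomSide ∩ B.topSide).Subsingleton) : UpRel R B := by
  rw [Set.not_subsingleton_iff] at h
  obtain ⟨p, hp, q, hq, hpq⟩ := h
  obtain ⟨hp1, hp2⟩ := hp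
  obtain ⟨hq1, hq2⟩ := hq
  simp only [PRect.bottomSide, PRect.topSide, Set.mem_prod, Set.mem_Icc,
    Set.mem_singleton_iff] at hp1 hp2 hq1 hq2
  have hy : R.y = B.y + B.h := by rw [← hp1.2, hp2.2]
  have h1 : p.1 ≠ q.1 := by
    intro h1
    exact hpq (Prod.ext h1 (by rw [hp1.2, hq1.2]))
  refine ⟨?_, hy.ge⟩
  rcases h1.lt_or_gt with h | h <;>
    exact ⟨by linarith [hp1.1.1, hq1.1.1, hp2.1.2, hq2.1.2],
           by linarith [hp2.1.1, hq2.1.1, hp1.1.2, hq1.1.2]⟩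

/-- A more-than-one-point left/right contact yields the `RtRel` relation. -/
lemma rtRel_of_contact {R B : PRect}
    (h : ¬ (R.leftSide ∩ B.rightSide).Subsingleton) : RtRel R B := by
  rw [Set.not_subsingleton_iff] at h
  obtain ⟨p, hp, q, hq, hpq⟩ := h
  obtain ⟨hp1, hp2⟩ := hp
  obtain ⟨hq1, hq2⟩ := hq
  simp only [PRect.leftSide, PRect.rightSide, Set.mem_prod, Set.mem_Icc,
    Set.mem_singleton_iff] at hp1 hp2 hq1 hq2
  have hx : R.x = B.x + B.w := by rw [← hp1.1, hp2.1]
  have h2 : p.2 ≠ q.2 := by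
    intro h2
    exact hpq (Prod.ext (by rw [hp1.1, hq1.1]) h2)
  refine ⟨?_, hx.ge⟩
  rcases h2.lt_or_gt with h | h <;>
    exact ⟨by linarith [hp1.2.1, hq1.2.1, hp2.2.2, hq2.2.2],
           by linarith [hp2.2.1, hq2.2.1, hp1.2.2, hq1.2.2]⟩

/-- If `Q` is a finite set of pairwise non-overlapping placed rectangles, then the
directed graph on `Q` given by `Arc` has no directed cycle. -/
theorem no_directed_cycle (Q : Set PRect) (hfin : Q.Finite)
    (hproper : ∀ R ∈ Q, R.Proper)
    (hpack : ∀ R ∈ Q, ∀ R' ∈ Q, R ≠ R' → ¬ R.Overlap R') :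
    ¬ ∃ (n : ℕ) (c : Fin (n + 1) → PRect),
        Function.Injective c ∧ (∀ i, c i ∈ Q) ∧
        ∀ i : Fin (n + 1), Arc (c i) (c (i + 1)) := by
  rintro ⟨n, c, hinj, hmem, harc⟩
  have hsub : Set.range c ⊆ Q := by
    rintro R ⟨i, rfl⟩
    exact hmem i
  obtain ⟨B, hBmem, hUP, hRT⟩ :=
    exists_sink (Set.range c) (Set.finite_range c) (Set.range_nonempty c)
      (fun R hR => hproper R (hsub hR))
      (fun R hR R' hR' hne => hpack R (hsub hR) R' (hsub hR') hne)
  obtain ⟨i0, rfl⟩ := hBmem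
  have harc' := harc (i0 - 1)
  rw [sub_add_cancel] at harc'
  rcases harc' with h | h
  · exact hUP (c (i0 - 1)) ⟨i0 - 1, rfl⟩ (upRel_of_contact h)
  · exact hRT (c (i0 - 1)) ⟨i0 - 1, rfl⟩ (rtRel_of_contact h)
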